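/- Let m ≥ 1, let f : ℝ^m → ℝ^m and q : ℝ × ℝ → ℝ^m be three times continuously differentiable with ∂_t q(t,x) + ∂_x( f(q(t,x)) ) = 0 for all (t,x). Fix x ∈ ℝ, t⁰ ∈ ℝ, and Δt > 0, and define the Taylor-discretized time-averaged flux F_T := f(q(t⁰,x)) − (Δt/2)·D f(q)( ∂_x f(q) ) + (Δt²/6)·[ D²f(q)( ∂_x f(q), ∂_x f(q) ) + D f(q)( ∂_x [ D f(q)( ∂_x f(q) ) ] ) ], where all quantities on the right are evaluated at (t⁰, x). Then ‖ F_T − (1/Δt) ∫_{t⁰}^{t⁰+Δt} f(q(t,x)) dt ‖ ≤ (Δt³/24) · sup_{t ∈ [t⁰, t⁰+Δt]} ‖ ∂_t³ ( f(q(t,x)) ) ‖; in particular the Taylor discretization approximates the exact time-averaged flux to third order in Δt. -/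

import Mathlib

open intervalIntegral Set

theorem pif_avg_taylor_bound {E : Type*} [NormedAddCommGroup E] [NormedSpace ℝ E]
    [CompleteSpace E]
    (g : ℝ → E) (hg : ContDiff ℝ 3 g) (t₀ Δt M : ℝ) (hΔt : 0 < Δt)
    (hM : ∀ t ∈ Icc t₀ (t₀ + Δt), ‖deriv (deriv (deriv g)) t‖ ≤ M) :
    ‖(g t₀ + (Δt / 2) • deriv g t₀ + (Δt ^ 2 / 6) • deriv (deriv g) t₀)
        - (1 / Δt) • ∫ t in t₀..(t₀ + Δt), g t‖ ≤ Δt ^ 3 / 24 * M := by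
  set T := t₀ + Δt with hT
  have h32 : (3 : WithTop ℕ∞) = 2 + 1 := by norm_num
  have h21 : (2 : WithTop ℕ∞) = 1 + 1 := by norm_num
  have h10 : (1 : WithTop ℕ∞) = 0 + 1 := by norm_num
  have hg0 : Differentiable ℝ g := hg.differentiable (by norm_num)
  have hg1 : ContDiff ℝ 2 (deriv g) := by
    rw [h32] at hg; exact (contDiff_succ_iff_deriv.mp hg).2.2
  have hg1d : Differentiable ℝ (deriv g) := hg1.differentiable (by norm_num)
  have hg2 : ContDiff ℝ 1 (deriv (deriv g)) := by
    rw [h21] at hg1; exact (contDiff_succ_iff_deriv.mp hg1).2.2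
  have hg2d : Differentiable ℝ (deriv (deriv g)) := hg2.differentiable (by norm_num)
  have hg3c : Continuous (deriv (deriv (deriv g))) := by
    rw [h10] at hg2
    exact ((contDiff_succ_iff_deriv.mp hg2).2.2).continuous
  have hM0 : 0 ≤ M := le_trans (norm_nonneg _) (hM t₀ ⟨le_rfl, by linarith⟩)
  -- bound 1
  have b1 : ∀ s ∈ Icc t₀ T, ‖deriv (deriv g) s - deriv (deriv g) t₀‖ ≤ M * (s - t₀) := by
    intro s hs
    have heq : (∫ σ in t₀..s, deriv (deriv (deriv g)) σ)
        = deriv (deriv g) s - deriv (deriv g) t₀ :=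
      intervalIntegral.integral_deriv_eq_sub (fun y _ => hg2d y)
        (hg3c.intervalIntegrable _ _)
    rw [← heq]
    have hb := intervalIntegral.norm_integral_le_of_norm_le_const (C := M)
      (f := fun σ => deriv (deriv (deriv g)) σ) (a := t₀) (b := s) ?_
    · calc _ ≤ M * |s - t₀| := hb
        _ = M * (s - t₀) := by rw [abs_of_nonneg (by linarith [hs.1])]
    · intro y hy
      rw [uIoc_of_le hs.1] at hy
      exact hM y ⟨le_of_lt hy.1, le_trans hy.2 hs.2⟩
  -- bound 2
  have b2 : ∀ s ∈ Icc t₀ T,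
      ‖deriv g s - deriv g t₀ - (s - t₀) • deriv (deriv g) t₀‖ ≤ M * (s - t₀) ^ 2 / 2 := by
    intro s hs
    have hder : ∀ σ : ℝ, HasDerivAt
        (fun σ => deriv g σ - deriv g t₀ - (σ - t₀) • deriv (deriv g) t₀)
        (deriv (deriv g) σ - deriv (deriv g) t₀) σ := by
      intro σ
      have h1 : HasDerivAt (fun σ : ℝ => (σ - t₀) • deriv (deriv g) t₀)
          (deriv (deriv g) t₀) σ := by
        simpa using (((hasDerivAt_id σ).sub_const t₀).smul_const (deriv (deriv g) t₀))
      exact (((hg1d σ).hasDerivAt).sub_const (deriv g t₀)).sub h1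
    have heq : (∫ σ in t₀..s, (deriv (deriv g) σ - deriv (deriv g) t₀))
        = (deriv g s - deriv g t₀ - (s - t₀) • deriv (deriv g) t₀) := by
      have := intervalIntegral.integral_eq_sub_of_hasDerivAt (a := t₀) (b := s)
        (f := fun σ =>
          deriv g σ - deriv g t₀ - (σ - t₀) • deriv (deriv g) t₀)
        (fun y _ => hder y)
        (((hg2.continuous.sub continuous_const)).intervalIntegrable _ _)
      simpa using this
    rw [← heq]
    have hb := intervalIntegral.norm_integral_le_of_norm_le
      (f := fun σ => deriv (deriv g) σ - deriv (deriv g) t₀) (a := t₀) (b := s)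
      (g := fun σ => M * (σ - t₀)) (μ := MeasureTheory.volume) hs.1 ?_ ?_
    · have hcomp : (∫ σ in t₀..s, M * (σ - t₀)) = M * (s - t₀) ^ 2 / 2 := by
        rw [intervalIntegral.integral_const_mul]
        have : (∫ σ in t₀..s, (σ - t₀)) = ∫ u in (t₀ - t₀)..(s - t₀), u := by
          exact intervalIntegral.integral_comp_sub_right (fun u => u) t₀
        rw [this, integral_id]
        ring
      rw [hcomp] at hb
      calc _ ≤ |M * (s - t₀) ^ 2 / 2| := hb.trans (le_abs_self _)
        _ = M * (s - t₀) ^ 2 / 2 := abs_of_nonneg (by positivity)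
    · filter_upwards with y hy
      exact b1 y ⟨le_of_lt hy.1, le_trans hy.2 hs.2⟩
    · exact ((continuous_const.mul (continuous_id.sub continuous_const)).intervalIntegrable _ _)
  -- bound 3
  have b3 : ∀ s ∈ Icc t₀ T,
      ‖g s - g t₀ - (s - t₀) • deriv g t₀ - ((s - t₀) ^ 2 / 2) • deriv (deriv g) t₀‖
        ≤ M * (s - t₀) ^ 3 / 6 := by
    intro s hs
    have hder : ∀ σ : ℝ, HasDerivAt
        (fun σ => g σ - g t₀ - (σ - t₀) • deriv g t₀
          - ((σ - t₀) ^ 2 / 2) • deriv (deriv g) t₀)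
        (deriv g σ - deriv g t₀ - (σ - t₀) • deriv (deriv g) t₀) σ := by
      intro σ
      have h1 : HasDerivAt (fun σ : ℝ => (σ - t₀) • deriv g t₀) (deriv g t₀) σ := by
        simpa using (((hasDerivAt_id σ).sub_const t₀).smul_const (deriv g t₀))
      have h2 : HasDerivAt (fun σ : ℝ => ((σ - t₀) ^ 2 / 2) • deriv (deriv g) t₀)
          ((σ - t₀) • deriv (deriv g) t₀) σ := by
        have hq : HasDerivAt (fun σ : ℝ => (σ - t₀) ^ 2 / 2) (σ - t₀) σ := by
          have := (((hasDerivAt_id σ).sub_const t₀).fun_pow 2).div_const 2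
          exact this.congr_deriv (by simp)
        simpa using hq.smul_const (deriv (deriv g) t₀)
      exact ((((hg0 σ).hasDerivAt).sub_const (g t₀)).sub h1).sub h2
    have heq : (∫ σ in t₀..s, (deriv g σ - deriv g t₀ - (σ - t₀) • deriv (deriv g) t₀))
        = g s - g t₀ - (s - t₀) • deriv g t₀ - ((s - t₀) ^ 2 / 2) • deriv (deriv g) t₀ := by
      have := intervalIntegral.integral_eq_sub_of_hasDerivAt (a := t₀) (b := s)
        (f := fun σ => g σ - g t₀ - (σ - t₀) • deriv g t₀
          - ((σ - t₀) ^ 2 / 2) • deriv (deriv g) t₀)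
        (fun y _ => hder y)
        (((hg1.continuous.sub continuous_const).sub
          ((continuous_id.sub continuous_const).smul continuous_const)).intervalIntegrable _ _)
      simpa using this
    rw [← heq]
    have hb := intervalIntegral.norm_integral_le_of_norm_le
      (f := fun σ => deriv g σ - deriv g t₀ - (σ - t₀) • deriv (deriv g) t₀) (a := t₀) (b := s)
      (g := fun σ => M * (σ - t₀) ^ 2 / 2) (μ := MeasureTheory.volume) hs.1 ?_ ?_
    · have hcomp : (∫ σ in t₀..s, M * (σ - t₀) ^ 2 / 2) = M * (s - t₀) ^ 3 / 6 := by
        have h1 : (fun σ : ℝ => M * (σ - t₀) ^ 2 / 2) = fun σ : ℝ => (M / 2) * (σ - t₀) ^ 2 := by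
          funext σ; ring
        rw [h1, intervalIntegral.integral_const_mul]
        have h2 : (∫ σ in t₀..s, (σ - t₀) ^ 2) = ∫ u in (t₀ - t₀)..(s - t₀), u ^ 2 :=
          intervalIntegral.integral_comp_sub_right (fun u => u ^ 2) t₀
        rw [h2, integral_pow]
        ring
      rw [hcomp] at hb
      calc _ ≤ |M * (s - t₀) ^ 3 / 6| := hb.trans (le_abs_self _)
        _ = M * (s - t₀) ^ 3 / 6 := abs_of_nonneg (div_nonneg (mul_nonneg hM0 (pow_nonneg (by linarith [hs.1]) 3)) (by norm_num))
    · filter_upwards with y hy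
      simpa [div_eq_mul_inv, mul_comm, mul_assoc] using b2 y ⟨le_of_lt hy.1, le_trans hy.2 hs.2⟩
    · exact ((continuous_const.mul
        ((continuous_id.sub continuous_const).pow 2)).div_const 2).intervalIntegrable _ _
  -- split the integral
  have hΔne : Δt ≠ 0 := ne_of_gt hΔt
  set R := ∫ t in t₀..T, (g t - g t₀ - (t - t₀) • deriv g t₀
      - ((t - t₀) ^ 2 / 2) • deriv (deriv g) t₀) with hR
  have hcont_g : Continuous g := hg.continuous
  have hint_g : IntervalIntegrable g MeasureTheory.volume t₀ T := hcont_g.intervalIntegrable _ _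
  have hint_c : IntervalIntegrable (fun _ : ℝ => g t₀) MeasureTheory.volume t₀ T :=
    continuous_const.intervalIntegrable _ _
  have hint_l : IntervalIntegrable (fun t : ℝ => (t - t₀) • deriv g t₀)
      MeasureTheory.volume t₀ T :=
    ((continuous_id.sub continuous_const).smul continuous_const).intervalIntegrable _ _
  have hint_q : IntervalIntegrable (fun t : ℝ => ((t - t₀) ^ 2 / 2) • deriv (deriv g) t₀)
      MeasureTheory.volume t₀ T :=
    ((((continuous_id.sub continuous_const).pow 2).div_const 2).smul
      continuous_const).intervalIntegrable _ _
  have i1 : (∫ _t in t₀..T, g t₀) = Δt • g t₀ := by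
    rw [intervalIntegral.integral_const]; rw [hT]; ring_nf
  have i2 : (∫ t in t₀..T, (t - t₀) • deriv g t₀) = (Δt ^ 2 / 2) • deriv g t₀ := by
    rw [intervalIntegral.integral_smul_const]
    have h2 : (∫ t in t₀..T, (t - t₀)) = ∫ u in (t₀ - t₀)..(T - t₀), u :=
      intervalIntegral.integral_comp_sub_right (fun u => u) t₀
    rw [h2, integral_id, hT]
    ring_nf
  have i3 : (∫ t in t₀..T, ((t - t₀) ^ 2 / 2) • deriv (deriv g) t₀)
      = (Δt ^ 3 / 6) • deriv (deriv g) t₀ := by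
    rw [intervalIntegral.integral_smul_const]
    have heq : (fun t : ℝ => (t - t₀) ^ 2 / 2) = fun t : ℝ => (1/2 : ℝ) * (t - t₀) ^ 2 := by
      funext t; ring
    rw [heq, intervalIntegral.integral_const_mul]
    have h2 : (∫ t in t₀..T, (t - t₀) ^ 2) = ∫ u in (t₀ - t₀)..(T - t₀), u ^ 2 :=
      intervalIntegral.integral_comp_sub_right (fun u => u ^ 2) t₀
    rw [h2, integral_pow, hT]
    ring_nf
  have hsplit : R = (∫ t in t₀..T, g t) - Δt • g t₀ - (Δt ^ 2 / 2) • deriv g t₀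
      - (Δt ^ 3 / 6) • deriv (deriv g) t₀ := by
    rw [hR, intervalIntegral.integral_sub ((hint_g.sub hint_c).sub hint_l) hint_q,
      intervalIntegral.integral_sub (hint_g.sub hint_c) hint_l,
      intervalIntegral.integral_sub hint_g hint_c, i1, i2, i3]
  have hIg : (∫ t in t₀..T, g t) = R + Δt • g t₀ + (Δt ^ 2 / 2) • deriv g t₀
      + (Δt ^ 3 / 6) • deriv (deriv g) t₀ := by
    rw [hsplit]; abel
  have s1 : (1 / Δt) * Δt = 1 := by field_simp
  have s2 : (1 / Δt) * (Δt ^ 2 / 2) = Δt / 2 := by field_simp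
  have s3 : (1 / Δt) * (Δt ^ 3 / 6) = Δt ^ 2 / 6 := by field_simp
  have hre : g t₀ + (Δt / 2) • deriv g t₀ + (Δt ^ 2 / 6) • deriv (deriv g) t₀
      - (1 / Δt) • ∫ t in t₀..T, g t = -((1 / Δt) • R) := by
    rw [hIg, smul_add, smul_add, smul_add, smul_smul, smul_smul, smul_smul, s1, s2, s3, one_smul]
    abel
  rw [hre, norm_neg, norm_smul]
  have hRb : ‖R‖ ≤ M * Δt ^ 4 / 24 := by
    have hb := intervalIntegral.norm_integral_le_of_norm_le
      (f := fun t => g t - g t₀ - (t - t₀) • deriv g t₀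
        - ((t - t₀) ^ 2 / 2) • deriv (deriv g) t₀) (a := t₀) (b := T)
      (g := fun t => M * (t - t₀) ^ 3 / 6) (μ := MeasureTheory.volume) (by linarith : t₀ ≤ T) ?_ ?_
    · have hcomp : (∫ t in t₀..T, M * (t - t₀) ^ 3 / 6) = M * Δt ^ 4 / 24 := by
        have h1 : (fun t : ℝ => M * (t - t₀) ^ 3 / 6) = fun t : ℝ => (M / 6) * (t - t₀) ^ 3 := by
          funext t; ring
        rw [h1, intervalIntegral.integral_const_mul]
        have h2 : (∫ t in t₀..T, (t - t₀) ^ 3) = ∫ u in (t₀ - t₀)..(T - t₀), u ^ 3 :=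
          intervalIntegral.integral_comp_sub_right (fun u => u ^ 3) t₀
        rw [h2, integral_pow, hT]
        ring_nf
      rw [hcomp] at hb
      calc ‖R‖ ≤ |M * Δt ^ 4 / 24| := hb.trans (le_abs_self _)
        _ = M * Δt ^ 4 / 24 := abs_of_nonneg (by positivity)
    · filter_upwards with y hy
      exact b3 y ⟨le_of_lt hy.1, hy.2⟩
    · exact (((continuous_const.mul
        ((continuous_id.sub continuous_const).pow 3)).div_const 6)).intervalIntegrable _ _
  calc ‖(1 / Δt : ℝ)‖ * ‖R‖ ≤ (1 / Δt) * (M * Δt ^ 4 / 24) := by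
        rw [Real.norm_eq_abs, abs_of_pos (by positivity)]
        exact mul_le_mul_of_nonneg_left hRb (by positivity)
    _ = Δt ^ 3 / 24 * M := by field_simp

section Slice

variable {F : Type*} [NormedAddCommGroup F] [NormedSpace ℝ F]

theorem pif_hasDerivAt_t (v : ℝ × ℝ → F) (t x : ℝ) (hv : DifferentiableAt ℝ v (t, x)) :
    HasDerivAt (fun τ => v (τ, x)) (fderiv ℝ v (t, x) (1, 0)) t := by
  have h1 : HasDerivAt (fun τ : ℝ => (τ, x)) ((1 : ℝ), (0 : ℝ)) t :=
    (hasDerivAt_id t).prodMk (hasDerivAt_const t x)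
  exact hv.hasFDerivAt.comp_hasDerivAt t h1

theorem pif_hasDerivAt_s (v : ℝ × ℝ → F) (t x : ℝ) (hv : DifferentiableAt ℝ v (t, x)) :
    HasDerivAt (fun s => v (t, s)) (fderiv ℝ v (t, x) (0, 1)) x := by
  have h1 : HasDerivAt (fun s : ℝ => (t, s)) ((0 : ℝ), (1 : ℝ)) x :=
    (hasDerivAt_const x t).prodMk (hasDerivAt_id x)
  exact hv.hasFDerivAt.comp_hasDerivAt x h1

end Slice

section Main

variable {E : Type*} [NormedAddCommGroup E] [NormedSpace ℝ E] [CompleteSpace E]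

theorem pif_main (f : E → E) (hf : ContDiff ℝ 3 f)
    (q : ℝ × ℝ → E) (hq : ContDiff ℝ 3 q)
    (pde : ∀ t x : ℝ,
      deriv (fun τ => q (τ, x)) t + deriv (fun s => f (q (t, s))) x = 0)
    (x t₀ : ℝ) (w : E)
    (hwdef : w = deriv (fun s => f (q (t₀, s))) x) :
    deriv (fun τ => f (q (τ, x))) t₀ = -((fderiv ℝ f (q (t₀, x))) w) ∧
    deriv (deriv (fun τ => f (q (τ, x)))) t₀ =
      iteratedFDeriv ℝ 2 f (q (t₀, x)) ![w, w]
        + (fderiv ℝ f (q (t₀, x)))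
            (deriv (fun s =>
              (fderiv ℝ f (q (t₀, s)))
                (deriv (fun σ => f (q (t₀, σ))) s)) x) := by
  have hu : ContDiff ℝ 3 (fun p : ℝ × ℝ => f (q p)) := hf.comp hq
  have hud : Differentiable ℝ (fun p : ℝ × ℝ => f (q p)) := hu.differentiable (by norm_num)
  have hqd : Differentiable ℝ q := hq.differentiable (by norm_num)
  have hfd : Differentiable ℝ f := hf.differentiable (by norm_num)
  set u : ℝ × ℝ → E := fun p => f (q p) with hu_def
  -- PDE in fderiv form
  have pde' : ∀ p : ℝ × ℝ, fderiv ℝ q p (1, 0) = -(fderiv ℝ u p (0, 1)) := by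
    rintro ⟨t, y⟩
    have h1 : deriv (fun τ => q (τ, y)) t = fderiv ℝ q (t, y) (1, 0) :=
      (pif_hasDerivAt_t q t y (hqd _)).deriv
    have h2 : deriv (fun s => f (q (t, s))) y = fderiv ℝ u (t, y) (0, 1) :=
      (pif_hasDerivAt_s u t y (hud _)).deriv
    have h3 := pde t y
    rw [h1, h2] at h3
    exact eq_neg_of_add_eq_zero_left h3
  -- chain rule
  have chain : ∀ (p : ℝ × ℝ) (v : ℝ × ℝ),
      fderiv ℝ u p v = fderiv ℝ f (q p) (fderiv ℝ q p v) := by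
    intro p v
    have h := fderiv_comp' p (hfd (q p)) (hqd p)
    rw [hu_def, h]
    rfl
  -- the time-derivative function A
  set A : ℝ × ℝ → E := fun p => fderiv ℝ u p (1, 0) with hA_def
  have hu1 : ContDiff ℝ 2 (fderiv ℝ u) := hu.fderiv_right (by norm_num)
  have hu1d : Differentiable ℝ (fderiv ℝ u) := hu1.differentiable (by norm_num)
  have hA2 : ContDiff ℝ 2 A := hu1.clm_apply contDiff_const
  have hAd : Differentiable ℝ A := hA2.differentiable (by norm_num)
  have hAeq : ∀ p : ℝ × ℝ, A p = -((fderiv ℝ f (q p)) (fderiv ℝ u p (0, 1))) := by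
    intro p
    rw [hA_def]
    simp only
    rw [chain, pde', map_neg]
  -- first derivative of g
  have hgderiv : ∀ t : ℝ, deriv (fun τ => f (q (τ, x))) t = A (t, x) := by
    intro t
    exact (pif_hasDerivAt_t u t x (hud _)).deriv
  -- w is the (0,1) derivative of u at (t₀, x)
  have hw : w = fderiv ℝ u (t₀, x) (0, 1) := by
    rw [hwdef]
    exact (pif_hasDerivAt_s u t₀ x (hud _)).deriv
  have first : deriv (fun τ => f (q (τ, x))) t₀ = -((fderiv ℝ f (q (t₀, x))) w) := by
    rw [hgderiv t₀, hAeq, hw]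
  refine ⟨first, ?_⟩
  -- second derivative
  have hderivg : deriv (fun τ => f (q (τ, x))) = fun t => A (t, x) := funext hgderiv
  have hdd : deriv (deriv (fun τ => f (q (τ, x)))) t₀ = fderiv ℝ A (t₀, x) (1, 0) := by
    rw [hderivg]
    exact (pif_hasDerivAt_t A t₀ x (hAd _)).deriv
  -- fderiv of A in terms of the second derivative of u
  have hfderivA : ∀ (p : ℝ × ℝ) (v : ℝ × ℝ),
      fderiv ℝ A p v = (fderiv ℝ (fderiv ℝ u) p v) (1, 0) := by
    intro p v
    have h := fderiv_clm_apply (𝕜 := ℝ) (c := fderiv ℝ u)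
      (u := fun _ : ℝ × ℝ => ((1 : ℝ), (0 : ℝ))) (hu1d p) (differentiableAt_const _)
    have : fderiv ℝ A p = fderiv ℝ (fun p : ℝ × ℝ => (fderiv ℝ u p) ((1 : ℝ), (0 : ℝ))) p := rfl
    rw [this, h]
    simp
  -- symmetry of the second derivative of u
  have hsymm : ∀ v₁ v₂ : ℝ × ℝ,
      fderiv ℝ (fderiv ℝ u) (t₀, x) v₁ v₂ = fderiv ℝ (fderiv ℝ u) (t₀, x) v₂ v₁ :=
    hu.contDiffAt.isSymmSndFDerivAt (by norm_num)
  -- the inner spatial derivative Z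
  set Z : E := deriv (fun s =>
      (fderiv ℝ f (q (t₀, s))) (deriv (fun σ => f (q (t₀, σ))) s)) x with hZ_def
  -- identify the mixed derivative with -Z
  have hmixed : (fderiv ℝ (fderiv ℝ u) (t₀, x) (1, 0)) (0, 1) = -Z := by
    rw [hsymm, ← hfderivA]
    have hAx : fderiv ℝ A (t₀, x) (0, 1) = deriv (fun s => A (t₀, s)) x :=
      ((pif_hasDerivAt_s A t₀ x (hAd _)).deriv).symm
    rw [hAx]
    have hfun : (fun s => A (t₀, s)) = fun s =>
        -((fderiv ℝ f (q (t₀, s))) (deriv (fun σ => f (q (t₀, σ))) s)) := by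
      funext s
      rw [hAeq]
      congr 1
      congr 1
      exact ((pif_hasDerivAt_s u t₀ s (hud _)).deriv).symm
    rw [hfun, hZ_def, deriv.fun_neg]
  -- derivative of p ↦ fderiv f (q p)
  have hf1 : ContDiff ℝ 2 (fderiv ℝ f) := hf.fderiv_right (by norm_num)
  have hf1d : Differentiable ℝ (fderiv ℝ f) := hf1.differentiable (by norm_num)
  have hL : HasFDerivAt (fun p : ℝ × ℝ => fderiv ℝ f (q p))
      ((fderiv ℝ (fderiv ℝ f) (q (t₀, x))).comp (fderiv ℝ q (t₀, x))) (t₀, x) :=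
    (hf1d (q (t₀, x))).hasFDerivAt.comp (t₀, x) (hqd (t₀, x)).hasFDerivAt
  -- derivative of B := p ↦ fderiv u p (0, 1)
  have hB : HasFDerivAt (fun p : ℝ × ℝ => fderiv ℝ u p (0, 1))
      ((fderiv ℝ u (t₀, x)).comp (0 : (ℝ × ℝ) →L[ℝ] ℝ × ℝ)
        + (fderiv ℝ (fderiv ℝ u) (t₀, x)).flip (0, 1)) (t₀, x) := by
    exact (hu1d (t₀, x)).hasFDerivAt.clm_apply (hasFDerivAt_const _ _)
  -- derivative of G := p ↦ (fderiv f (q p)) (fderiv u p (0,1))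
  have hG := hL.clm_apply hB
  have hGA : HasFDerivAt A
      (-((fderiv ℝ f (q (t₀, x))).comp
          ((fderiv ℝ u (t₀, x)).comp (0 : (ℝ × ℝ) →L[ℝ] ℝ × ℝ)
            + (fderiv ℝ (fderiv ℝ u) (t₀, x)).flip (0, 1))
        + (((fderiv ℝ (fderiv ℝ f) (q (t₀, x))).comp
            (fderiv ℝ q (t₀, x))).flip (fderiv ℝ u (t₀, x) (0, 1))))) (t₀, x) := by
    have h := hG.fun_neg
    have hfun : (fun p : ℝ × ℝ =>
        -((fderiv ℝ f (q p)) (fderiv ℝ u p (0, 1)))) = A := (funext hAeq).symm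
    rwa [hfun] at h
  have hfA : fderiv ℝ A (t₀, x) (1, 0) =
      -((fderiv ℝ f (q (t₀, x))) ((fderiv ℝ (fderiv ℝ u) (t₀, x) (1, 0)) (0, 1))
        + (fderiv ℝ (fderiv ℝ f) (q (t₀, x))) (fderiv ℝ q (t₀, x) (1, 0)) w) := by
    rw [hGA.fderiv]
    simp [hw]
  rw [hdd, hfA, hmixed, pde', ← hw]
  have h2f : iteratedFDeriv ℝ 2 f (q (t₀, x)) ![w, w]
      = (fderiv ℝ (fderiv ℝ f) (q (t₀, x))) w w := by
    rw [iteratedFDeriv_two_apply]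
    simp
  rw [h2f]
  simp [map_neg]

end Main


set_option maxHeartbeats 1000000 in
/-- The Taylor (Lax–Wendroff) discretization of the Picard integral
formulation approximates the exact time-averaged flux to third order in `Δt`. -/
theorem taylor_discretization_third_order
    (m : ℕ) (hm : 1 ≤ m)
    (f : EuclideanSpace ℝ (Fin m) → EuclideanSpace ℝ (Fin m))
    (hf : ContDiff ℝ 3 f)
    (q : ℝ × ℝ → EuclideanSpace ℝ (Fin m)) (hq : ContDiff ℝ 3 q)
    (pde : ∀ t x : ℝ,
      deriv (fun τ => q (τ, x)) t + deriv (fun s => f (q (t, s))) x = 0)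
    (x t₀ Δt : ℝ) (hΔt : 0 < Δt)
    (w : EuclideanSpace ℝ (Fin m))
    (hwdef : w = deriv (fun s => f (q (t₀, s))) x)
    (FT : EuclideanSpace ℝ (Fin m))
    (hFT : FT = f (q (t₀, x))
        - (Δt / 2) • (fderiv ℝ f (q (t₀, x))) w
        + (Δt ^ 2 / 6) •
          (iteratedFDeriv ℝ 2 f (q (t₀, x)) ![w, w]
            + (fderiv ℝ f (q (t₀, x)))
                (deriv (fun s =>
                  (fderiv ℝ f (q (t₀, s)))
                    (deriv (fun σ => f (q (t₀, σ))) s)) x))) :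
    ‖FT - (1 / Δt) • (∫ t in t₀..(t₀ + Δt), f (q (t, x)))‖
      ≤ (Δt ^ 3 / 24) *
        ⨆ t : Icc t₀ (t₀ + Δt),
          ‖iteratedDeriv 3 (fun τ => f (q (τ, x))) t‖ := by
  set g : ℝ → EuclideanSpace ℝ (Fin m) := fun τ => f (q (τ, x)) with hg_def
  have hg : ContDiff ℝ 3 g := hf.comp (hq.comp (contDiff_id.prodMk contDiff_const))
  obtain ⟨h1, h2⟩ := pif_main f hf q hq pde x t₀ w hwdef
  have h1' : deriv g t₀ = -((fderiv ℝ f (q (t₀, x))) w) := h1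
  have h2' : deriv (deriv g) t₀ =
      iteratedFDeriv ℝ 2 f (q (t₀, x)) ![w, w]
        + (fderiv ℝ f (q (t₀, x)))
            (deriv (fun s =>
              (fderiv ℝ f (q (t₀, s)))
                (deriv (fun σ => f (q (t₀, σ))) s)) x) := h2
  have hFT' : FT = g t₀ + (Δt / 2) • deriv g t₀ + (Δt ^ 2 / 6) • deriv (deriv g) t₀ := by
    rw [hFT, h1', h2', smul_neg, ← sub_eq_add_neg]
  -- the sup bound
  set M : ℝ := ⨆ t : Icc t₀ (t₀ + Δt), ‖iteratedDeriv 3 g t‖ with hM_def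
  have hid3 : iteratedDeriv 3 g = deriv (deriv (deriv g)) := by
    rw [show (3 : ℕ) = 2 + 1 from rfl, iteratedDeriv_succ,
      show (2 : ℕ) = 1 + 1 from rfl, iteratedDeriv_succ, iteratedDeriv_one]
  have hcont3 : Continuous (iteratedDeriv 3 g) :=
    hg.continuous_iteratedDeriv 3 (by norm_num)
  have hbdd : BddAbove (range fun t : Icc t₀ (t₀ + Δt) => ‖iteratedDeriv 3 g (t : ℝ)‖) := by
    have hsub : (range fun t : Icc t₀ (t₀ + Δt) => ‖iteratedDeriv 3 g (t : ℝ)‖)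
        ⊆ (fun t => ‖iteratedDeriv 3 g t‖) '' (Icc t₀ (t₀ + Δt)) := by
      rintro _ ⟨t, rfl⟩
      exact ⟨t, t.2, rfl⟩
    exact ((isCompact_Icc.image hcont3.norm).bddAbove).mono hsub
  have hM : ∀ t ∈ Icc t₀ (t₀ + Δt), ‖deriv (deriv (deriv g)) t‖ ≤ M := by
    intro t ht
    rw [← hid3]
    exact le_ciSup hbdd ⟨t, ht⟩
  have hmain := pif_avg_taylor_bound g hg t₀ Δt M hΔt hM
  rw [hFT']
  exact hmain
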